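/- Let k be an algebraically closed field of characteristic 0 and let A = M_{r_1}(k) × ··· × M_{r_k}(k) be a product of matrix algebras with Σ_s r_s² = n. Then the space Z²(A,A) of Hochschild 2-cocycles of A with values in A has dimension n² − n + k over k. -/

import Mathlib

open scoped BigOperators

/-- The space `Z²(A,A)` of Hochschild 2-cocycles of `A` with values in `A`, as a
`K`-submodule of the space of bilinear maps `A × A → A`. -/
def hochschildZ2 (K A : Type*) [Field K] [Ring A] [Algebra K A] :
    Submodule K (A →ₗ[K] A →ₗ[K] A) where
  carrier := {y | ∀ a b c : A, a * y b c - y (a * b) c + y a (b * c) - y a b * c = 0}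
  zero_mem' := by intro a b c; simp
  add_mem' := by
    intro y z hy hz a b c
    have h := congrArg₂ (· + ·) (hy a b c) (hz a b c)
    simp only [add_zero] at h
    simp only [LinearMap.add_apply, mul_add, add_mul]
    rw [← h]; abel
  smul_mem' := by
    intro s y hy a b c
    simp only [LinearMap.smul_apply, Algebra.mul_smul_comm, Algebra.smul_mul_assoc,
      ← smul_sub, ← smul_add]
    rw [hy a b c, smul_zero]


section Gen
variable (K A : Type*) [Field K] [Ring A] [Algebra K A]

/-- Hochschild differential `C¹ → C²`. -/
def hd1 : (A →ₗ[K] A) →ₗ[K] (A →ₗ[K] A →ₗ[K] A) where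
  toFun g := LinearMap.mk₂ K (fun a b => a * g b - g (a * b) + g a * b)
    (fun a a' b => by simp only [add_mul, map_add]; abel)
    (fun c a b => by
      simp only [smul_mul_assoc, LinearMap.map_smul, mul_smul_comm, smul_sub, smul_add])
    (fun a b b' => by simp only [mul_add, map_add]; abel)
    (fun c a b => by
      simp only [mul_smul_comm, LinearMap.map_smul, smul_mul_assoc, smul_sub, smul_add])
  map_add' g g' := by
    ext a b
    simp only [LinearMap.mk₂_apply, LinearMap.add_apply, mul_add, add_mul]
    abel
  map_smul' c g := by
    ext a b
    simp only [LinearMap.mk₂_apply, LinearMap.smul_apply, RingHom.id_apply,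
      mul_smul_comm, smul_mul_assoc, smul_sub, smul_add]

@[simp] lemma hd1_apply (g : A →ₗ[K] A) (a b : A) :
    hd1 K A g a b = a * g b - g (a * b) + g a * b := rfl

/-- Hochschild differential `C⁰ → C¹`. -/
def hd0 : A →ₗ[K] (A →ₗ[K] A) where
  toFun x := LinearMap.mulRight K x - LinearMap.mulLeft K x
  map_add' x y := by
    ext a
    simp only [LinearMap.sub_apply, LinearMap.mulRight_apply, LinearMap.mulLeft_apply,
      LinearMap.add_apply, mul_add, add_mul]
    abel
  map_smul' c x := by
    ext a
    simp only [LinearMap.sub_apply, LinearMap.mulRight_apply, LinearMap.mulLeft_apply,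
      LinearMap.smul_apply, RingHom.id_apply, mul_smul_comm, smul_mul_assoc, smul_sub]

@[simp] lemma hd0_apply (x a : A) : hd0 K A x a = a * x - x * a := rfl

lemma range_hd1_le : LinearMap.range (hd1 K A) ≤ hochschildZ2 K A := by
  rintro _ ⟨g, rfl⟩ a b c
  simp only [hd1_apply, mul_sub, mul_add, sub_mul, add_mul, map_mul, mul_assoc]
  abel

lemma range_hd0_le_ker_hd1 : LinearMap.range (hd0 K A) ≤ LinearMap.ker (hd1 K A) := by
  rintro _ ⟨x, rfl⟩
  rw [LinearMap.mem_ker]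
  ext a b
  simp only [hd1_apply, hd0_apply, LinearMap.zero_apply, mul_sub, sub_mul, mul_assoc]
  abel

end Gen
/-- The product of matrix algebras. -/
abbrev MatAlg (K : Type*) [Field K] {m : ℕ} (r : Fin m → ℕ) : Type _ :=
  ∀ s, Matrix (Fin (r s)) (Fin (r s)) K

section Mat
variable {K : Type*} [Field K] {m : ℕ} (r : Fin m → ℕ)

lemma mul_single_eq (a : MatAlg K r) (s : Fin m) (M : Matrix (Fin (r s)) (Fin (r s)) K) :
    a * Pi.single s M = Pi.single s (a s * M) := by
  funext t
  by_cases h : t = s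
  · subst h; simp
  · simp [Pi.single_eq_of_ne h]

lemma single_mul_eq (a : MatAlg K r) (s : Fin m) (M : Matrix (Fin (r s)) (Fin (r s)) K) :
    Pi.single s M * a = Pi.single s (M * a s) := by
  funext t
  by_cases h : t = s
  · subst h; simp
  · simp [Pi.single_eq_of_ne h]

variable (hr : ∀ s, 0 < r s)

/-- first leg of the separability idempotent -/
noncomputable def sepU (j : Σ s, Fin (r s)) : MatAlg K r :=
  Pi.single j.1 (Matrix.single j.2 ⟨0, hr j.1⟩ 1)

/-- second leg of the separability idempotent -/
noncomputable def sepV (j : Σ s, Fin (r s)) : MatAlg K r :=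
  Pi.single j.1 (Matrix.single ⟨0, hr j.1⟩ j.2 1)

lemma sum_sepU_mul_sepV : ∑ j : Σ s, Fin (r s), sepU r hr j * sepV r hr j = (1 : MatAlg K r) := by
  rw [← Finset.univ_sigma_univ, Finset.sum_sigma]
  have h1 : ∀ (s : Fin m) (i : Fin (r s)), sepU r hr ⟨s, i⟩ * sepV r hr ⟨s, i⟩
      = (Pi.single s (Matrix.single i i (1 : K)) : MatAlg K r) := by
    intro s i
    rw [sepU, sepV, ← Pi.single_mul, Matrix.single_mul_single_same, one_mul]
  have h2 : ∀ s : Fin m, ∑ i : Fin (r s), Matrix.single i i (1 : K)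
      = (1 : Matrix (Fin (r s)) (Fin (r s)) K) := by
    intro s
    ext a b
    simp only [Matrix.sum_apply, Matrix.single, Matrix.of_apply, Matrix.one_apply]
    by_cases h : a = b
    · subst h; rw [Finset.sum_eq_single a] <;> simp +contextual
    · rw [Finset.sum_eq_zero (fun i _ => ?_), if_neg h]
      rw [if_neg]
      rintro ⟨rfl, rfl⟩; exact h rfl
  calc ∑ s : Fin m, ∑ i : Fin (r s), sepU r hr ⟨s, i⟩ * sepV r hr ⟨s, i⟩
      = ∑ s : Fin m, Pi.single s (1 : Matrix (Fin (r s)) (Fin (r s)) K) := by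
        refine Finset.sum_congr rfl fun s _ => ?_
        simp_rw [h1]
        rw [← h2 s]
        exact (map_sum (LinearMap.single K _ s) _ _).symm
    _ = 1 := by
        have := Finset.univ_sum_single (1 : MatAlg K r)
        simpa using this

lemma single_sum (s : Fin m) {ι : Type*} (t : Finset ι)
    (f : ι → Matrix (Fin (r s)) (Fin (r s)) K) :
    (Pi.single s (∑ q ∈ t, f q) : MatAlg K r) = ∑ q ∈ t, Pi.single s (f q) := by
  funext t'
  rw [Finset.sum_apply]
  by_cases h : t' = s
  · subst h; simp
  · simp [Pi.single_eq_of_ne h]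

lemma mulE_left {p : ℕ} (M : Matrix (Fin p) (Fin p) K) (i z : Fin p) :
    M * Matrix.single i z 1 = ∑ q, M q i • Matrix.single q z 1 := by
  ext a b
  simp only [Matrix.mul_apply, Matrix.sum_apply, Matrix.smul_apply, Matrix.single,
    Matrix.of_apply, mul_ite, mul_one, mul_zero, smul_ite, smul_eq_mul, smul_zero]
  by_cases hz : z = b <;> simp [hz]

lemma mulE_right {p : ℕ} (M : Matrix (Fin p) (Fin p) K) (i z : Fin p) :
    Matrix.single z i 1 * M = ∑ q, M i q • Matrix.single z q 1 := by
  ext a b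
  simp only [Matrix.mul_apply, Matrix.sum_apply, Matrix.smul_apply, Matrix.single,
    Matrix.of_apply, ite_mul, one_mul, zero_mul, smul_ite, smul_eq_mul, smul_zero]
  by_cases hz : z = a <;> simp [hz, mul_comm]

lemma central (B : MatAlg K r →ₗ[K] MatAlg K r →ₗ[K] MatAlg K r) (a : MatAlg K r) :
    ∑ j : Σ s, Fin (r s), B (a * sepU r hr j) (sepV r hr j)
      = ∑ j : Σ s, Fin (r s), B (sepU r hr j) (sepV r hr j * a) := by
  rw [← Finset.univ_sigma_univ, Finset.sum_sigma, Finset.sum_sigma]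
  refine Finset.sum_congr rfl fun s _ => ?_
  calc ∑ i : Fin (r s), B (a * sepU r hr ⟨s, i⟩) (sepV r hr ⟨s, i⟩)
      = ∑ i : Fin (r s), ∑ q : Fin (r s), a s q i •
          B (Pi.single s (Matrix.single q ⟨0, hr s⟩ 1))
            (Pi.single s (Matrix.single ⟨0, hr s⟩ i 1)) := by
        refine Finset.sum_congr rfl fun i _ => ?_
        rw [sepU, sepV, mul_single_eq, mulE_left, single_sum]
        simp only [Pi.single_smul, map_sum, map_smul, LinearMap.sum_apply, LinearMap.smul_apply]
    _ = ∑ q : Fin (r s), ∑ i : Fin (r s), a s q i •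
          B (Pi.single s (Matrix.single q ⟨0, hr s⟩ 1))
            (Pi.single s (Matrix.single ⟨0, hr s⟩ i 1)) := Finset.sum_comm
    _ = ∑ i : Fin (r s), B (sepU r hr ⟨s, i⟩) (sepV r hr ⟨s, i⟩ * a) := by
        refine Finset.sum_congr rfl fun i _ => ?_
        rw [sepU, sepV, single_mul_eq, mulE_right, single_sum]
        simp only [Pi.single_smul, map_sum, map_smul, LinearMap.sum_apply, LinearMap.smul_apply]

end Mat
section Coh
variable {K : Type*} [Field K] {m : ℕ} (r : Fin m → ℕ) (hr : ∀ s, 0 < r s)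
include hr

lemma Z2_le_range_hd1 :
    hochschildZ2 K (MatAlg K r) ≤ LinearMap.range (hd1 K (MatAlg K r)) := by
  intro f hf
  set g : MatAlg K r →ₗ[K] MatAlg K r :=
    ∑ j : Σ s, Fin (r s), (LinearMap.mulLeft K (sepU r hr j)).comp (f (sepV r hr j)) with hg
  have hgapp : ∀ x, g x = ∑ j : Σ s, Fin (r s), sepU r hr j * f (sepV r hr j) x := by
    intro x
    rw [hg]
    simp [LinearMap.sum_apply]
  refine ⟨g, ?_⟩
  refine LinearMap.ext fun a => LinearMap.ext fun b => ?_
  rw [hd1_apply]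
  -- the bilinear map (x, y) ↦ x * f y b
  set B : MatAlg K r →ₗ[K] MatAlg K r →ₗ[K] MatAlg K r :=
    LinearMap.mk₂ K (fun x y => x * f y b)
      (fun x x' y => add_mul _ _ _)
      (fun c x y => smul_mul_assoc _ _ _)
      (fun x y y' => by rw [map_add, LinearMap.add_apply, mul_add])
      (fun c x y => by rw [map_smul, LinearMap.smul_apply, mul_smul_comm]) with hB
  have hcen := central r hr B a
  simp only [hB, LinearMap.mk₂_apply] at hcen
  have h1 : a * g b = ∑ j : Σ s, Fin (r s), sepU r hr j * f (sepV r hr j * a) b := by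
    rw [hgapp, Finset.mul_sum, ← hcen]
    refine Finset.sum_congr rfl fun j _ => ?_
    rw [mul_assoc]
  have h3 : g a * b = ∑ j : Σ s, Fin (r s), sepU r hr j * (f (sepV r hr j) a * b) := by
    rw [hgapp, Finset.sum_mul]
    refine Finset.sum_congr rfl fun j _ => ?_
    rw [mul_assoc]
  have h4 : f a b = ∑ j : Σ s, Fin (r s), sepU r hr j * (sepV r hr j * f a b) := by
    conv_lhs => rw [← one_mul (f a b), ← sum_sepU_mul_sepV r hr, Finset.sum_mul]
    refine Finset.sum_congr rfl fun j _ => ?_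
    rw [mul_assoc]
  calc a * g b - g (a * b) + g a * b
      = ∑ j : Σ s, Fin (r s), (sepU r hr j * f (sepV r hr j * a) b
          - sepU r hr j * f (sepV r hr j) (a * b)
          + sepU r hr j * (f (sepV r hr j) a * b)) := by
        rw [h1, h3, hgapp, ← Finset.sum_sub_distrib, ← Finset.sum_add_distrib]
    _ = ∑ j : Σ s, Fin (r s), sepU r hr j * (sepV r hr j * f a b) := by
        refine Finset.sum_congr rfl fun j _ => ?_
        have h := hf (sepV r hr j) a b
        have h' : sepV r hr j * f a b
            = f (sepV r hr j * a) b - f (sepV r hr j) (a * b) + f (sepV r hr j) a * b := by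
          rw [← sub_eq_zero, ← h]; abel
        rw [h', mul_add, mul_sub]
    _ = f a b := h4.symm

lemma ker_hd1_le_range_hd0 :
    LinearMap.ker (hd1 K (MatAlg K r)) ≤ LinearMap.range (hd0 K (MatAlg K r)) := by
  intro g hg
  rw [LinearMap.mem_ker] at hg
  have hg' : ∀ a b : MatAlg K r, a * g b - g (a * b) + g a * b = 0 := by
    intro a b
    have := LinearMap.congr_fun (LinearMap.congr_fun hg a) b
    simpa using this
  set x : MatAlg K r := ∑ j : Σ s, Fin (r s), sepU r hr j * g (sepV r hr j) with hx
  refine ⟨x, ?_⟩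
  refine LinearMap.ext fun a => ?_
  rw [hd0_apply]
  set B : MatAlg K r →ₗ[K] MatAlg K r →ₗ[K] MatAlg K r :=
    LinearMap.mk₂ K (fun p q => p * g q)
      (fun p p' q => add_mul _ _ _)
      (fun c p q => smul_mul_assoc _ _ _)
      (fun p q q' => by rw [map_add, mul_add])
      (fun c p q => by rw [map_smul, mul_smul_comm]) with hB
  have hcen := central r hr B a
  simp only [hB, LinearMap.mk₂_apply] at hcen
  have h1 : a * x = ∑ j : Σ s, Fin (r s), sepU r hr j * g (sepV r hr j * a) := by
    rw [hx, Finset.mul_sum, ← hcen]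
    refine Finset.sum_congr rfl fun j _ => ?_
    rw [mul_assoc]
  have h2 : x * a = ∑ j : Σ s, Fin (r s), sepU r hr j * (g (sepV r hr j) * a) := by
    rw [hx, Finset.sum_mul]
    refine Finset.sum_congr rfl fun j _ => ?_
    rw [mul_assoc]
  have h4 : g a = ∑ j : Σ s, Fin (r s), sepU r hr j * (sepV r hr j * g a) := by
    conv_lhs => rw [← one_mul (g a), ← sum_sepU_mul_sepV r hr, Finset.sum_mul]
    refine Finset.sum_congr rfl fun j _ => ?_
    rw [mul_assoc]
  refine Eq.symm ?_
  calc g a = ∑ j : Σ s, Fin (r s), sepU r hr j * (sepV r hr j * g a) := h4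
    _ = ∑ j : Σ s, Fin (r s), (sepU r hr j * g (sepV r hr j * a)
          - sepU r hr j * (g (sepV r hr j) * a)) := by
        refine Finset.sum_congr rfl fun j _ => ?_
        have h := hg' (sepV r hr j) a
        have h' : sepV r hr j * g a = g (sepV r hr j * a) - g (sepV r hr j) * a := by
          rw [← sub_eq_zero, ← h]; abel
        rw [h', mul_sub]
    _ = a * x - x * a := by
        rw [Finset.sum_sub_distrib, ← h1, ← h2]

end Coh
section Center
variable {K : Type*} [Field K] {m : ℕ} (r : Fin m → ℕ) (hr : ∀ s, 0 < r s)

/-- The diagonal embedding `K^m → A`. -/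
noncomputable def diagEmb : (Fin m → K) →ₗ[K] MatAlg K r :=
  LinearMap.pi fun s =>
    (LinearMap.proj s).smulRight (1 : Matrix (Fin (r s)) (Fin (r s)) K)

@[simp] lemma diagEmb_apply (c : Fin m → K) (s : Fin m) :
    diagEmb r c s = c s • (1 : Matrix (Fin (r s)) (Fin (r s)) K) := rfl

lemma scalar_eq_smul_one {p : ℕ} (c : K) :
    Matrix.scalar (Fin p) c = c • (1 : Matrix (Fin p) (Fin p) K) := by
  ext i j
  by_cases h : i = j <;>
    simp [Matrix.scalar_apply, Matrix.one_apply, Matrix.diagonal_apply, h]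

omit hr in
lemma ker_hd0_eq : LinearMap.ker (hd0 K (MatAlg K r)) = LinearMap.range (diagEmb r) := by
  apply le_antisymm
  · intro x hx
    rw [LinearMap.mem_ker] at hx
    have hcomm : ∀ (s : Fin m) (M : Matrix (Fin (r s)) (Fin (r s)) K), M * x s = x s * M := by
      intro s M
      have h := LinearMap.congr_fun hx (Pi.single s M)
      rw [hd0_apply, LinearMap.zero_apply, sub_eq_zero, single_mul_eq, mul_single_eq] at h
      have := congrFun h s
      simpa using this
    have hsc : ∀ s : Fin m, ∃ c : K, x s = c • 1 := by
      intro s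
      obtain ⟨c, hc⟩ := Matrix.mem_range_scalar_of_commute_single
        (M := x s) (fun i j _ => (hcomm s (Matrix.single i j 1)))
      exact ⟨c, by rw [← hc, scalar_eq_smul_one]⟩
    choose c hc using hsc
    exact ⟨c, by funext s; rw [diagEmb_apply, ← hc]⟩
  · rintro _ ⟨c, rfl⟩
    rw [LinearMap.mem_ker]
    refine LinearMap.ext fun a => ?_
    rw [hd0_apply, LinearMap.zero_apply, sub_eq_zero]
    funext s
    simp [mul_smul_comm, smul_mul_assoc]

include hr in
lemma diagEmb_inj : Function.Injective (diagEmb (K := K) r) := by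
  rw [← LinearMap.ker_eq_bot, eq_bot_iff]
  intro c hc
  rw [LinearMap.mem_ker] at hc
  have : ∀ s, c s = 0 := by
    intro s
    have h := congrFun hc s
    rw [diagEmb_apply] at h
    have h2 := congrFun (congrFun h ⟨0, hr s⟩) ⟨0, hr s⟩
    simpa [Matrix.one_apply] using h2
  simpa using (funext this : c = 0)

end Center

section Main
variable {K : Type*} [Field K] {m : ℕ} (r : Fin m → ℕ) (hr : ∀ s, 0 < r s)

include hr in
lemma finrank_Z2 {n : ℕ} (hsum : ∑ s, (r s) ^ 2 = n) :
    Module.finrank K (hochschildZ2 K (MatAlg K r)) = n * n - (n - m) := by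
  have hA : Module.finrank K (MatAlg K r) = n := by
    rw [← hsum]
    rw [Module.finrank_pi_fintype]
    refine Finset.sum_congr rfl fun s _ => ?_
    simp [Module.finrank_matrix, pow_two]
  have hC1 : Module.finrank K (MatAlg K r →ₗ[K] MatAlg K r) = n * n := by
    rw [Module.finrank_linearMap, hA]
  -- kernel of d0 has dimension m
  have hker0 : Module.finrank K (LinearMap.ker (hd0 K (MatAlg K r))) = m := by
    rw [ker_hd0_eq r, LinearMap.finrank_range_of_inj (diagEmb_inj r hr)]
    simp [Module.finrank_pi]
  have hrn0 := LinearMap.finrank_range_add_finrank_ker (hd0 K (MatAlg K r))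
  rw [hker0, hA] at hrn0
  -- kernel of d1 = range of d0
  have hker1 : LinearMap.ker (hd1 K (MatAlg K r)) = LinearMap.range (hd0 K (MatAlg K r)) :=
    le_antisymm (ker_hd1_le_range_hd0 r hr) (range_hd0_le_ker_hd1 K (MatAlg K r))
  have hZ2 : hochschildZ2 K (MatAlg K r) = LinearMap.range (hd1 K (MatAlg K r)) :=
    le_antisymm (Z2_le_range_hd1 r hr) (range_hd1_le K (MatAlg K r))
  have hrn1 := LinearMap.finrank_range_add_finrank_ker (K := K)
    (V := MatAlg K r →ₗ[K] MatAlg K r) (V₂ := MatAlg K r →ₗ[K] MatAlg K r →ₗ[K] MatAlg K r)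
    (hd1 K (MatAlg K r))
  rw [hker1, hC1] at hrn1
  have hm_le : m ≤ n := by
    rw [← hsum]
    calc m = ∑ _s : Fin m, 1 := by simp
      _ ≤ ∑ s, (r s) ^ 2 := Finset.sum_le_sum fun s _ =>
          Nat.one_le_iff_ne_zero.mpr (pow_ne_zero 2 (hr s).ne')
  rw [hZ2]
  omega

end Main

/-- for `K` algebraically closed of characteristic 0 and
`A = M_{r_1}(K) × ··· × M_{r_m}(K)` with `∑ s, r s ^ 2 = n`, the space `Z²(A,A)` of
Hochschild 2-cocycles of `A` with values in `A` has dimension `n² − n + m` over `K`. -/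
theorem stmt_7 {K : Type*} [Field K] [IsAlgClosed K] [CharZero K]
    {m n : ℕ} (r : Fin m → ℕ) (hr : ∀ s, 0 < r s) (hsum : ∑ s, (r s) ^ 2 = n) :
    Module.finrank K
        (hochschildZ2 K (∀ s, Matrix (Fin (r s)) (Fin (r s)) K)) = n ^ 2 - n + m := by
  have h : Module.finrank K
      (hochschildZ2 K (∀ s, Matrix (Fin (r s)) (Fin (r s)) K)) = n * n - (n - m) :=
    finrank_Z2 r hr hsum
  have hm_le : m ≤ n := by
    rw [← hsum]
    calc m = ∑ _s : Fin m, 1 := by simp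
      _ ≤ ∑ s, (r s) ^ 2 := Finset.sum_le_sum fun s _ =>
          Nat.one_le_iff_ne_zero.mpr (pow_ne_zero 2 (hr s).ne')
  have hpow : n ^ 2 = n * n := pow_two n
  have hn : n ≤ n * n := by nlinarith
  rw [h, hpow]
  omega
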